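/- Let G be a group, ρ : G → {±1} a homomorphism with kernel G₀, and a : G × G → ℂ* a ρ-twisted 2-cocycle. Define b(k,l)=a(k,l), θ(g)=a(g,g), w(g,k) = a(g,k⁻¹)a(gk⁻¹,g⁻¹)a(k,k⁻¹)/a(g,g⁻¹). Then for all g ∉ G₀ and k ∈ G₀: b(g²,k)·θ(g) = b(g k⁻¹ g⁻¹, gkgk)·w(g,k)·θ(gk). -/

import Mathlib

def IsRhoTwistedCocycle {G : Type*} [Group G] (ρ : G →* ℤˣ) (a : G → G → ℂˣ) : Prop :=
  ∀ g h k : G, a g h * a (g * h) k = a h k ^ ((ρ g : ℤ)) * a g (h * k)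

noncomputable def w {G : Type*} [Group G] (a : G → G → ℂˣ) (h k : G) : ℂˣ :=
  a h k⁻¹ * a (h * k⁻¹) h⁻¹ * a k k⁻¹ * (a h h⁻¹)⁻¹

theorem crosscap_multiplication_axiom {G : Type*} [Group G] (ρ : G →* ℤˣ) (a : G → G → ℂˣ)
    (ha : IsRhoTwistedCocycle ρ a) :
    ∀ g k : G, ρ g = -1 → ρ k = 1 →
      a (g ^ 2) k * a g g =
        a (g * k⁻¹ * g⁻¹) (g * k * g * k) * w a g k * a (g * k) (g * k) := by
  intro g k hg hk
  have hγ : ρ g⁻¹ = -1 := by rw [map_inv, hg]; rfl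
  have hκ : ρ k⁻¹ = 1 := by rw [map_inv, hk]; rfl
  have hρ1 : ρ (1 : G) = 1 := map_one ρ
  -- instance (g, g, k)
  have h1 := ha g g k
  rw [hg] at h1
  simp only [Units.val_neg, Units.val_one, zpow_neg, zpow_one, mul_assoc,
    inv_mul_cancel_left, mul_inv_cancel_left, inv_mul_cancel, mul_inv_cancel,
    one_mul, mul_one] at h1
  have H1 := congrArg Units.val h1
  simp only [Units.val_mul, Units.val_inv_eq_inv_val] at H1
  field_simp at H1
  simp only [div_eq_mul_inv, one_mul, mul_one, mul_assoc] at H1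
  -- instance (g, k⁻¹, g⁻¹)
  have h2 := ha g k⁻¹ g⁻¹
  rw [hg] at h2
  simp only [Units.val_neg, Units.val_one, zpow_neg, zpow_one, mul_assoc,
    inv_mul_cancel_left, mul_inv_cancel_left, inv_mul_cancel, mul_inv_cancel,
    one_mul, mul_one] at h2
  have H2 := congrArg Units.val h2
  simp only [Units.val_mul, Units.val_inv_eq_inv_val] at H2
  field_simp at H2
  simp only [div_eq_mul_inv, one_mul, mul_one, mul_assoc] at H2
  -- instance (g, k⁻¹ * g⁻¹, g*k*g*k)
  have h3 := ha g (k⁻¹ * g⁻¹) (g * k * g * k)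
  rw [hg] at h3
  simp only [Units.val_neg, Units.val_one, zpow_neg, zpow_one, mul_assoc,
    inv_mul_cancel_left, mul_inv_cancel_left, inv_mul_cancel, mul_inv_cancel,
    one_mul, mul_one] at h3
  have H3 := congrArg Units.val h3
  simp only [Units.val_mul, Units.val_inv_eq_inv_val] at H3
  field_simp at H3
  simp only [div_eq_mul_inv, one_mul, mul_one, mul_assoc] at H3
  -- instance (k⁻¹, g⁻¹, g*k*g*k)
  have h4 := ha k⁻¹ g⁻¹ (g * k * g * k)
  rw [hκ] at h4
  simp only [Units.val_neg, Units.val_one, zpow_neg, zpow_one, mul_assoc,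
    inv_mul_cancel_left, mul_inv_cancel_left, inv_mul_cancel, mul_inv_cancel,
    one_mul, mul_one] at h4
  have H4 := congrArg Units.val h4
  simp only [Units.val_mul, Units.val_inv_eq_inv_val] at H4
  -- instance (g⁻¹, g*k, g*k)
  have h5 := ha g⁻¹ (g * k) (g * k)
  rw [hγ] at h5
  simp only [Units.val_neg, Units.val_one, zpow_neg, zpow_one, mul_assoc,
    inv_mul_cancel_left, mul_inv_cancel_left, inv_mul_cancel, mul_inv_cancel,
    one_mul, mul_one] at h5
  have H5 := congrArg Units.val h5
  simp only [Units.val_mul, Units.val_inv_eq_inv_val] at H5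
  field_simp at H5
  simp only [div_eq_mul_inv, one_mul, mul_one, mul_assoc] at H5
  -- instance (k⁻¹, k, g*k)
  have h6 := ha k⁻¹ k (g * k)
  rw [hκ] at h6
  simp only [Units.val_neg, Units.val_one, zpow_neg, zpow_one, mul_assoc,
    inv_mul_cancel_left, mul_inv_cancel_left, inv_mul_cancel, mul_inv_cancel,
    one_mul, mul_one] at h6
  have H6 := congrArg Units.val h6
  simp only [Units.val_mul, Units.val_inv_eq_inv_val] at H6
  -- instance (g⁻¹, g, k)
  have h7 := ha g⁻¹ g k
  rw [hγ] at h7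
  simp only [Units.val_neg, Units.val_one, zpow_neg, zpow_one, mul_assoc,
    inv_mul_cancel_left, mul_inv_cancel_left, inv_mul_cancel, mul_inv_cancel,
    one_mul, mul_one] at h7
  have H7 := congrArg Units.val h7
  simp only [Units.val_mul, Units.val_inv_eq_inv_val] at H7
  field_simp at H7
  simp only [div_eq_mul_inv, one_mul, mul_one, mul_assoc] at H7
  -- instance (1, 1, k)
  have h8a := ha 1 1 k
  rw [hρ1] at h8a
  simp only [Units.val_neg, Units.val_one, zpow_neg, zpow_one, one_mul, mul_one] at h8a
  have H8a := congrArg Units.val h8a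
  simp only [Units.val_mul, Units.val_inv_eq_inv_val] at H8a
  -- instance (1, 1, g*k)
  have h8b := ha 1 1 (g * k)
  rw [hρ1] at h8b
  simp only [Units.val_neg, Units.val_one, zpow_neg, zpow_one, one_mul, mul_one] at h8b
  have H8b := congrArg Units.val h8b
  simp only [Units.val_mul, Units.val_inv_eq_inv_val] at H8b
  -- instance (1, 1, g)
  have h8c := ha 1 1 g
  rw [hρ1] at h8c
  simp only [Units.val_neg, Units.val_one, zpow_neg, zpow_one, one_mul, mul_one] at h8c
  have H8c := congrArg Units.val h8c
  simp only [Units.val_mul, Units.val_inv_eq_inv_val] at H8c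
  -- instance (g, 1, 1)
  have h9 := ha g 1 1
  rw [hg] at h9
  simp only [Units.val_neg, Units.val_one, zpow_neg, zpow_one, one_mul, mul_one] at h9
  have H9 := congrArg Units.val h9
  simp only [Units.val_mul, Units.val_inv_eq_inv_val] at H9
  field_simp at H9
  -- instance (k, 1, 1)
  have hk9 := ha k 1 1
  rw [hk] at hk9
  simp only [Units.val_neg, Units.val_one, zpow_neg, zpow_one, one_mul, mul_one] at hk9
  have Hk9 := congrArg Units.val hk9
  simp only [Units.val_mul, Units.val_inv_eq_inv_val] at Hk9
  -- instance (g, g⁻¹, g)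
  have h10 := ha g g⁻¹ g
  rw [hg] at h10
  simp only [Units.val_neg, Units.val_one, zpow_neg, zpow_one, mul_assoc,
    inv_mul_cancel_left, mul_inv_cancel_left, inv_mul_cancel, mul_inv_cancel,
    one_mul, mul_one] at h10
  have H10 := congrArg Units.val h10
  simp only [Units.val_mul, Units.val_inv_eq_inv_val] at H10
  field_simp at H10
  simp only [div_eq_mul_inv, one_mul, mul_one, mul_assoc] at H10
  -- instance (k, k⁻¹, k)
  have h11 := ha k k⁻¹ k
  rw [hk] at h11
  simp only [Units.val_neg, Units.val_one, zpow_neg, zpow_one, mul_assoc,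
    inv_mul_cancel_left, mul_inv_cancel_left, inv_mul_cancel, mul_inv_cancel,
    one_mul, mul_one] at h11
  have H11 := congrArg Units.val h11
  simp only [Units.val_mul, Units.val_inv_eq_inv_val] at H11
  clear h1 h2 h3 h4 h5 h6 h7 h8a h8b h8c h9 hk9 h10 h11
  rw [Units.ext_iff]
  simp only [w, pow_two, Units.val_mul, Units.val_inv_eq_inv_val, mul_assoc]
  field_simp
  simp only [div_eq_mul_inv, one_mul, mul_one, mul_assoc]
  set x1 : ℂ := ((a g g : ℂˣ) : ℂ) with hx1
  set x2 : ℂ := ((a (g * g) k : ℂˣ) : ℂ) with hx2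
  set x3 : ℂ := ((a g k : ℂˣ) : ℂ) with hx3
  set x4 : ℂ := ((a g (g * k) : ℂˣ) : ℂ) with hx4
  set x5 : ℂ := ((a g k⁻¹ : ℂˣ) : ℂ) with hx5
  set x6 : ℂ := ((a (g * k⁻¹) g⁻¹ : ℂˣ) : ℂ) with hx6
  set x7 : ℂ := ((a k⁻¹ g⁻¹ : ℂˣ) : ℂ) with hx7
  set x8 : ℂ := ((a g (k⁻¹ * g⁻¹) : ℂˣ) : ℂ) with hx8
  set x9 : ℂ := ((a (g * (k⁻¹ * g⁻¹)) (g * (k * (g * k))) : ℂˣ) : ℂ) with hx9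
  set x10 : ℂ := ((a (k⁻¹ * g⁻¹) (g * (k * (g * k))) : ℂˣ) : ℂ) with hx10
  set x11 : ℂ := ((a g⁻¹ (g * (k * (g * k))) : ℂˣ) : ℂ) with hx11
  set x12 : ℂ := ((a k⁻¹ (k * (g * k)) : ℂˣ) : ℂ) with hx12
  set x13 : ℂ := ((a g⁻¹ (g * k) : ℂˣ) : ℂ) with hx13
  set x14 : ℂ := ((a k (g * k) : ℂˣ) : ℂ) with hx14
  set x15 : ℂ := ((a (g * k) (g * k) : ℂˣ) : ℂ) with hx15
  set x16 : ℂ := ((a k⁻¹ k : ℂˣ) : ℂ) with hx16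
  set x17 : ℂ := ((a 1 (g * k) : ℂˣ) : ℂ) with hx17
  set x18 : ℂ := ((a g⁻¹ g : ℂˣ) : ℂ) with hx18
  set x19 : ℂ := ((a 1 k : ℂˣ) : ℂ) with hx19
  set x20 : ℂ := ((a 1 1 : ℂˣ) : ℂ) with hx20
  set x21 : ℂ := ((a 1 g : ℂˣ) : ℂ) with hx21
  set x22 : ℂ := ((a g 1 : ℂˣ) : ℂ) with hx22
  set x23 : ℂ := ((a k 1 : ℂˣ) : ℂ) with hx23
  set x24 : ℂ := ((a g g⁻¹ : ℂˣ) : ℂ) with hx24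
  set x25 : ℂ := ((a k k⁻¹ : ℂˣ) : ℂ) with hx25
  have n3 : x3 ≠ 0 := by rw [hx3]; exact Units.ne_zero _
  have n14 : x14 ≠ 0 := by rw [hx14]; exact Units.ne_zero _
  have n19 : x19 ≠ 0 := by rw [hx19]; exact Units.ne_zero _
  have n17 : x17 ≠ 0 := by rw [hx17]; exact Units.ne_zero _
  have n21 : x21 ≠ 0 := by rw [hx21]; exact Units.ne_zero _
  have n22 : x22 ≠ 0 := by rw [hx22]; exact Units.ne_zero _
  have n23 : x23 ≠ 0 := by rw [hx23]; exact Units.ne_zero _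
  have n20 : x20 ≠ 0 := by rw [hx20]; exact Units.ne_zero _
  have A8a : x20 = x19 := mul_right_cancel₀ n19 H8a
  have A8b : x20 = x17 := mul_right_cancel₀ n17 H8b
  have A8c : x20 = x21 := mul_right_cancel₀ n21 H8c
  have Ak : x23 = x20 := mul_right_cancel₀ n23 Hk9
  have A9 : x22 * x20 = 1 := mul_left_cancel₀ n22 (by linear_combination x22 * H9)
  have A10 : x24 * x18 * x20 ^ 2 = 1 := by
    linear_combination x20 * H10 + A9 + x24 * x18 * x20 * A8c
  have A11 : x25 = x16 := by
    refine mul_right_cancel₀ n20 ?_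
    linear_combination H11 + x25 * A8a + x16 * Ak
  have C3 : x9 * x8 * x10 = x1 * x2 * x3 := by linear_combination H3 - H1
  have C3' : x9 * x5 * x6 * x7 * x10 = x1 * x2 * x3 := by
    linear_combination C3 + x9 * x10 * H2
  have B12 : x12 * x14 = x16 * x20 := by linear_combination -H6 - x16 * A8b
  have B13 : x13 = x18 * x20 * x3 := by linear_combination -H7 - x18 * x3 * A8a
  have B11 : x11 = x18 * x20 * x3 * x14 * x15 := by
    linear_combination -H5 + x14 * x15 * B13
  have B10 : x7 * x10 * x14 = x11 * x16 * x20 := by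
    linear_combination x14 * H4 + x11 * B12
  have B10' : x7 * x10 * x14 = x18 * x20 ^ 2 * x3 * x14 * x15 * x16 := by
    linear_combination B10 + x16 * x20 * B11
  have C4 : x9 * x5 * x6 * (x18 * x20 ^ 2 * x15 * x16) * (x3 * x14) =
      x1 * x2 * (x3 * x14) := by
    linear_combination x14 * C3' - x9 * x5 * x6 * B10'
  have C5 : x9 * x5 * x6 * (x18 * x20 ^ 2 * x15 * x16) = x1 * x2 :=
    mul_right_cancel₀ (mul_ne_zero n3 n14) C4
  linear_combination -x24 * C5 + x9 * x5 * x6 * x15 * x16 * A10 - x9 * x5 * x6 * x15 * A11
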